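/- arXiv:math/0312418 — 2 statements merged into one kernel-verified Lean document; each statement's English description precedes it below -/
import Mathlib

section
/- The number b(n) of non-squashing partitions of n into distinct parts satisfies the recurrence b(0) = b(1) = 1, b(2m) = b(2m-1) + b(m) - 1 for m ≥ 1, and b(2m+1) = b(2m) + 1 for m ≥ 1. -/
/-- A partition written as a nondecreasing list of positive parts. -/
def IsPartList (l : List ℕ) : Prop :=
  l.Pairwise (· ≤ ·) ∧ ∀ p ∈ l, 0 < p

/-- A partition with distinct parts, written as a strictly increasing list of positive parts. -/
def DistinctPartList (l : List ℕ) : Prop :=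
  l.Pairwise (· < ·) ∧ ∀ p ∈ l, 0 < p

/-- The s-non-squashing condition: (s-1)(p₁+⋯+p_j) ≤ p_{j+1} for 1 ≤ j ≤ k-1. -/
def NSq (s : ℕ) (l : List ℕ) : Prop :=
  ∀ j, 0 < j → j < l.length → (s - 1) * (l.take j).sum ≤ l.getD j 0

/-- Number of non-squashing partitions of n into distinct parts. -/
noncomputable def b (n : ℕ) : ℕ :=
  {l : List ℕ | DistinctPartList l ∧ NSq 2 l ∧ l.sum = n}.ncard

namespace NSqAux

def S (n : ℕ) : Set (List ℕ) := {l | DistinctPartList l ∧ NSq 2 l ∧ l.sum = n}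

def V (m : ℕ) : Set (List ℕ) := {t | DistinctPartList t ∧ NSq 2 t ∧ t.sum ≤ m}

def T (n : ℕ) : Set (List ℕ) :=
  {t | DistinctPartList t ∧ NSq 2 t ∧ 2 * t.sum ≤ n ∧ ¬(2 * t.sum = n ∧ t = [t.sum])}

lemma b_eq (n : ℕ) : b n = (S n).ncard := rfl

lemma nsq_iff {l : List ℕ} :
    NSq 2 l ↔ ∀ j, 0 < j → j < l.length → (l.take j).sum ≤ l.getD j 0 := by
  simp [NSq]

lemma mem_le_sum {l : List ℕ} {y : ℕ} (hy : y ∈ l) : y ≤ l.sum :=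
  List.single_le_sum (fun _ _ => Nat.zero_le _) _ hy

lemma eq_singleton_of_mem_sum {t : List ℕ} (hpos : ∀ p ∈ t, 0 < p) {y : ℕ}
    (hy : y ∈ t) (hsum : t.sum = y) : t = [y] := by
  obtain ⟨a, c, rfl⟩ := List.append_of_mem hy
  simp only [List.sum_append, List.sum_cons] at hsum
  have ha : a.sum = 0 := by omega
  have hc : c.sum = 0 := by omega
  have ha' : a = [] := by
    cases a with
    | nil => rfl
    | cons z a' =>
      have : 0 < z := hpos z (by simp)
      simp [List.sum_cons] at ha; omega
  have hc' : c = [] := by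
    cases c with
    | nil => rfl
    | cons z c' =>
      have : 0 < z := hpos z (by simp)
      simp [List.sum_cons] at hc; omega
  simp [ha', hc']

lemma getD_concat_length (t : List ℕ) (x : ℕ) : (t ++ [x]).getD t.length 0 = x := by
  rw [List.getD_eq_getElem?_getD, List.getElem?_concat_length]
  rfl

lemma nsq_concat {t : List ℕ} {x : ℕ} :
    NSq 2 (t ++ [x]) ↔ NSq 2 t ∧ t.sum ≤ x := by
  rw [nsq_iff, nsq_iff]
  constructor
  · intro h
    constructor
    · intro j hj hjl
      have h1 := h j hj (by simp; omega)
      rwa [List.take_append_of_le_length (by omega), List.getD_append _ _ _ _ hjl] at h1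
    · rcases Nat.eq_zero_or_pos t.length with h0 | h0
      · have : t = [] := List.length_eq_zero_iff.mp h0
        simp [this]
      · have h1 := h t.length h0 (by simp)
        rwa [List.take_left, getD_concat_length] at h1
  · rintro ⟨h1, h2⟩ j hj hjl
    simp only [List.length_append, List.length_singleton] at hjl
    rcases lt_or_ge j t.length with hlt | hge
    · rw [List.take_append_of_le_length (by omega), List.getD_append _ _ _ _ hlt]
      exact h1 j hj hlt
    · have : j = t.length := by omega
      subst this
      rwa [List.take_left, getD_concat_length]

lemma concat_mem_S {t : List ℕ} {x n : ℕ} :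
    (t ++ [x]) ∈ S n ↔ DistinctPartList t ∧ NSq 2 t ∧ (∀ y ∈ t, y < x) ∧ 0 < x ∧
      t.sum ≤ x ∧ t.sum + x = n := by
  simp only [S, Set.mem_setOf_eq, DistinctPartList, List.pairwise_append,
    List.pairwise_singleton, List.mem_append, List.mem_singleton, List.sum_append,
    List.sum_singleton, nsq_concat]
  constructor
  · rintro ⟨⟨⟨hs, -, hlt⟩, hpos⟩, ⟨hn1, hn2⟩, hsum⟩
    exact ⟨⟨hs, fun p hp => hpos p (Or.inl hp)⟩, hn1,
      fun y hy => by simpa using hlt y hy x rfl, hpos x (Or.inr rfl), hn2, hsum⟩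
  · rintro ⟨⟨hs, hpos⟩, hn1, hlt, hx, hle, hsum⟩
    refine ⟨⟨⟨hs, trivial, fun a ha b hb => by rw [hb]; exact hlt a ha⟩, ?_⟩, ⟨hn1, hle⟩, hsum⟩
    rintro p (hp | rfl)
    · exact hpos p hp
    · exact hx

lemma S_eq_image (n : ℕ) (hn : 1 ≤ n) :
    S n = (fun t => t ++ [n - t.sum]) '' T n := by
  ext l
  constructor
  · intro hl
    rcases l.eq_nil_or_concat' with rfl | ⟨t, x, rfl⟩
    · exfalso
      have := hl.2.2
      simp at this; omega
    · rw [concat_mem_S] at hl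
      obtain ⟨hdpl, hnsq, hlt, hx, hle, hsum⟩ := hl
      refine ⟨t, ⟨hdpl, hnsq, by omega, ?_⟩, ?_⟩
      · rintro ⟨h2, ht⟩
        have hxx : x = t.sum := by omega
        have : t.sum ∈ t := by rw [ht]; simp
        have := hlt _ this
        omega
      · simp only
        congr 1
        congr 1
        omega
  · rintro ⟨t, ⟨hdpl, hnsq, hle2, hexc⟩, rfl⟩
    rw [concat_mem_S]
    have hlt : ∀ y ∈ t, y < n - t.sum := by
      intro y hy
      have h1 : y ≤ t.sum := mem_le_sum hy
      rcases lt_or_ge y (n - t.sum) with h | h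
      · exact h
      · exfalso
        have hys : t.sum = y := by omega
        have := eq_singleton_of_mem_sum hdpl.2 hy hys
        exact hexc ⟨by omega, by rw [this]; simp⟩
    exact ⟨hdpl, hnsq, hlt, by omega, by omega, by omega⟩

lemma ncard_S_eq_T (n : ℕ) (hn : 1 ≤ n) : (S n).ncard = (T n).ncard := by
  rw [S_eq_image n hn]
  apply Set.ncard_image_of_injOn
  intro t1 _ t2 _ h
  simpa using congrArg List.dropLast h

lemma T_odd (m : ℕ) : T (2 * m + 1) = V m := by
  ext t
  simp only [T, V, Set.mem_setOf_eq]
  constructor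
  · rintro ⟨h1, h2, h3, -⟩; exact ⟨h1, h2, by omega⟩
  · rintro ⟨h1, h2, h3⟩; exact ⟨h1, h2, by omega, by rintro ⟨h, -⟩; omega⟩

lemma T_even (m : ℕ) : T (2 * m) = V m \ {[m]} := by
  ext t
  simp only [T, V, Set.mem_diff, Set.mem_setOf_eq, Set.mem_singleton_iff]
  constructor
  · rintro ⟨h1, h2, h3, h4⟩
    refine ⟨⟨h1, h2, by omega⟩, ?_⟩
    rintro rfl
    exact h4 ⟨by simp, by simp⟩
  · rintro ⟨⟨h1, h2, h3⟩, h4⟩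
    refine ⟨h1, h2, by omega, ?_⟩
    rintro ⟨h5, h6⟩
    apply h4
    rw [h6]
    congr 1
    omega

lemma singleton_mem_V {m : ℕ} (hm : 1 ≤ m) : [m] ∈ V m := by
  refine ⟨⟨List.pairwise_singleton _ m, by simp; omega⟩, ?_, by simp⟩
  intro j hj hjl
  simp at hjl
  omega

lemma V_finite (m : ℕ) : (V m).Finite := by
  apply Set.Finite.subset
    (((Finset.range (m + 1)).powerset.image (fun s => Finset.sort s (· ≤ ·))).finite_toSet)
  intro t ht
  obtain ⟨⟨hsort, hpos⟩, -, hsum⟩ := ht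
  simp only [Finset.coe_image, Set.mem_image, Finset.mem_coe, Finset.mem_powerset]
  refine ⟨t.toFinset, ?_, ?_⟩
  · intro y hy
    rw [List.mem_toFinset] at hy
    have := mem_le_sum hy
    simp only [Finset.mem_range]
    omega
  · exact (List.toFinset_sort (· ≤ ·) hsort.nodup).mpr (hsort.imp le_of_lt)

lemma S_subset_V (m : ℕ) : S m ⊆ V m := by
  rintro l ⟨h1, h2, h3⟩
  exact ⟨h1, h2, le_of_eq h3⟩

lemma S_finite (m : ℕ) : (S m).Finite := (V_finite m).subset (S_subset_V m)

lemma V_succ (m : ℕ) : V (m + 1) = V m ∪ S (m + 1) := by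
  ext t
  simp only [V, S, Set.mem_union, Set.mem_setOf_eq]
  constructor
  · rintro ⟨h1, h2, h3⟩
    rcases Nat.lt_or_ge t.sum (m + 1) with h | h
    · exact Or.inl ⟨h1, h2, by omega⟩
    · exact Or.inr ⟨h1, h2, by omega⟩
  · rintro (⟨h1, h2, h3⟩ | ⟨h1, h2, h3⟩)
    · exact ⟨h1, h2, by omega⟩
    · exact ⟨h1, h2, by omega⟩

lemma V_card_succ (m : ℕ) : (V (m + 1)).ncard = (V m).ncard + b (m + 1) := by
  rw [V_succ, Set.ncard_union_eq ?_ (V_finite m) (S_finite (m + 1)), b_eq]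
  rw [Set.disjoint_left]
  rintro t ⟨-, -, h1⟩ ⟨-, -, h2⟩
  omega

lemma b_odd (m : ℕ) : b (2 * m + 1) = (V m).ncard := by
  rw [b_eq, ncard_S_eq_T _ (by omega), T_odd]

lemma b_even {m : ℕ} (hm : 1 ≤ m) : b (2 * m) + 1 = (V m).ncard := by
  rw [b_eq, ncard_S_eq_T _ (by omega), T_even]
  exact Set.ncard_diff_singleton_add_one (singleton_mem_V hm) (V_finite m)

lemma V_zero : V 0 = {[]} := by
  ext t
  simp only [V, Set.mem_setOf_eq, Set.mem_singleton_iff]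
  constructor
  · rintro ⟨⟨-, hpos⟩, -, hsum⟩
    cases t with
    | nil => rfl
    | cons z t' =>
      have : 0 < z := hpos z (by simp)
      simp [List.sum_cons] at hsum
      omega
  · rintro rfl
    refine ⟨⟨List.Pairwise.nil, by simp⟩, ?_, by simp⟩
    intro j hj hjl
    simp at hjl

lemma b_zero : b 0 = 1 := by
  rw [b_eq]
  have : S 0 = {[]} := by
    ext t
    simp only [S, Set.mem_setOf_eq, Set.mem_singleton_iff]
    constructor
    · rintro ⟨⟨-, hpos⟩, -, hsum⟩
      cases t with
      | nil => rfl
      | cons z t' =>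
        have : 0 < z := hpos z (by simp)
        simp [List.sum_cons] at hsum
        omega
    · rintro rfl
      refine ⟨⟨List.Pairwise.nil, by simp⟩, ?_, by simp⟩
      intro j hj hjl
      simp at hjl
  rw [this, Set.ncard_singleton]

end NSqAux

theorem stmt_4 :
    b 0 = 1 ∧ b 1 = 1 ∧
    (∀ m, 1 ≤ m → b (2 * m) = b (2 * m - 1) + b m - 1) ∧
    (∀ m, 1 ≤ m → b (2 * m + 1) = b (2 * m) + 1) := by
  refine ⟨NSqAux.b_zero, ?_, ?_, ?_⟩
  · have h := NSqAux.b_odd 0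
    rw [NSqAux.V_zero] at h
    simpa using h
  · intro m hm
    obtain ⟨k, rfl⟩ : ∃ k, m = k + 1 := ⟨m - 1, by omega⟩
    have h1 : b (2 * (k + 1)) + 1 = (NSqAux.V (k + 1)).ncard := NSqAux.b_even (by omega)
    have h2 := NSqAux.V_card_succ k
    have h3 := NSqAux.b_odd k
    have h4 : 2 * (k + 1) - 1 = 2 * k + 1 := by omega
    rw [h4]
    omega
  · intro m hm
    have h1 := NSqAux.b_odd m
    have h2 := NSqAux.b_even hm
    omega
end

section
/- For m > 0, b(16m) ≡ b(8m) (mod 2), b(32m+8) is even, and b(32m+24) is odd, where b(n) is the number of non-squashing partitions of n into distinct parts. -/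
open List

def A (n : ℕ) : Set (List ℕ) := {l | DistinctPartList l ∧ NSq 2 l ∧ l.sum = n}

lemma mem_A_concat {l : List ℕ} {p n : ℕ} :
    (l ++ [p]) ∈ A n ↔
      (DistinctPartList l ∧ NSq 2 l) ∧ (∀ x ∈ l, x < p) ∧ 0 < p ∧ l.sum ≤ p ∧ n = l.sum + p := by
  constructor
  · rintro ⟨⟨hs, hpos⟩, hnsq, hsum⟩
    rw [List.pairwise_append] at hs
    refine ⟨⟨⟨hs.1, fun x hx => hpos x (by simp [hx])⟩, ?_⟩, ?_, hpos p (by simp), ?_, ?_⟩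
    · intro j hj hjl
      have h1 := hnsq j hj (by simp; omega)
      rwa [List.take_append_of_le_length (by omega), List.getD_append _ _ _ _ hjl] at h1
    · exact fun x hx => hs.2.2 x hx p (by simp)
    · rcases Nat.eq_zero_or_pos l.length with h | h
      · simp [List.eq_nil_of_length_eq_zero h]
      · have h1 := hnsq l.length h (by simp)
        rw [List.take_append_of_le_length le_rfl, List.take_length,
          List.getD_append_right _ _ _ _ le_rfl, Nat.sub_self] at h1
        simpa using h1
    · rw [← hsum]; simp
  · rintro ⟨⟨⟨hs, hpos⟩, hnsq⟩, hlt, hp, hle, rfl⟩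
    refine ⟨⟨?_, ?_⟩, ?_, by simp⟩
    · rw [List.pairwise_append]
      exact ⟨hs, by simp, fun x hx b hb => by simp at hb; subst hb; exact hlt x hx⟩
    · intro x hx; simp at hx; rcases hx with hx | hx
      · exact hpos x hx
      · subst hx; exact hp
    · intro j hj hjl
      simp at hjl
      rcases Nat.lt_or_ge j l.length with h | h
      · have h1 := hnsq j hj h
        rwa [List.take_append_of_le_length (by omega), List.getD_append _ _ _ _ h]
      · have hj' : j = l.length := by omega
        subst hj'
        rw [List.take_append_of_le_length le_rfl, List.take_length,
          List.getD_append_right _ _ _ _ le_rfl, Nat.sub_self]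
        simpa using hle

lemma elem_le_sum {l : List ℕ} {x : ℕ} (hx : x ∈ l) : x ≤ l.sum :=
  List.single_le_sum (fun y _ => Nat.zero_le y) x hx

lemma eq_single_of_mem_sum {l : List ℕ} (hpos : ∀ p ∈ l, 0 < p) {x : ℕ} (hx : x ∈ l)
    (hsum : l.sum = x) : l = [x] := by
  obtain ⟨a, c, rfl⟩ := List.append_of_mem hx
  rw [List.sum_append, List.sum_cons] at hsum
  have ha : a.sum = 0 := by omega
  have hc : c.sum = 0 := by omega
  have ha' : a = [] := by
    cases a with
    | nil => rfl
    | cons y t =>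
      have := hpos y (by simp)
      simp [List.sum_cons] at ha; omega
  have hc' : c = [] := by
    cases c with
    | nil => rfl
    | cons y t =>
      have := hpos y (by simp)
      simp [List.sum_cons] at hc; omega
  simp [ha', hc']

lemma A_finite (n : ℕ) : (A n).Finite := by
  apply Set.Finite.subset
    (((Finset.range (n + 1)).powerset.image (fun s => Finset.sort s (· ≤ ·))).finite_toSet)
  rintro l ⟨⟨hs, hpos⟩, _, hsum⟩
  have hnd : l.Nodup := hs.nodup
  simp only [Finset.coe_image, Set.mem_image, Finset.mem_coe, Finset.mem_powerset]
  refine ⟨l.toFinset, ?_, ?_⟩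
  · intro x hx
    rw [List.mem_toFinset] at hx
    have := elem_le_sum hx
    rw [hsum] at this
    exact Finset.mem_range.2 (by omega)
  · exact (List.toFinset_sort (· ≤ ·) hnd).2 (hs.imp (fun h => le_of_lt h))

lemma b_def (n : ℕ) : (A n).ncard = (A n).ncard := rfl

lemma A_zero : A 0 = {([] : List ℕ)} := by
  ext l
  constructor
  · rintro ⟨⟨_, hpos⟩, _, hsum⟩
    cases l with
    | nil => rfl
    | cons y t => have := hpos y (by simp); simp [List.sum_cons] at hsum; omega
  · rintro rfl
    exact ⟨⟨by simp, by simp⟩, fun j hj hjl => by simp at hjl, rfl⟩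

lemma singleton_mem_A {p : ℕ} (hp : 0 < p) : [p] ∈ A p := by
  have : ([] : List ℕ) ++ [p] ∈ A p := by
    rw [mem_A_concat]
    refine ⟨⟨⟨by simp, by simp⟩, fun j hj hjl => by simp at hjl⟩,
      by simp, hp, by simp, by simp⟩
  simpa using this

lemma A_one : A 1 = {[1]} := by
  ext l
  constructor
  · rintro hl
    have hne : l ≠ [] := by
      rintro rfl
      exact one_ne_zero hl.2.2.symm
    obtain ⟨l', p, rfl⟩ : ∃ l' p, l = l' ++ [p] :=
      ⟨l.dropLast, l.getLast hne, (List.dropLast_append_getLast hne).symm⟩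
    rw [mem_A_concat] at hl
    obtain ⟨⟨hd, hn⟩, hlt, hp, hle, hsum⟩ := hl
    have hl0 : l'.sum = 0 := by omega
    have hp1 : p = 1 := by omega
    have : l' = [] := by
      cases l' with
      | nil => rfl
      | cons y t => have := hd.2 y (by simp); simp [List.sum_cons] at hl0; omega
    simp [this, hp1]
  · rintro rfl
    exact singleton_mem_A one_pos

def inc (l : List ℕ) : List ℕ := l.dropLast ++ [l.getLast?.getD 0 + 1]

lemma inc_concat (l : List ℕ) (p : ℕ) : inc (l ++ [p]) = l ++ [p + 1] := by
  simp [inc]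

lemma exists_concat_of_mem {n : ℕ} (hn : 0 < n) {l : List ℕ} (hl : l ∈ A n) :
    ∃ l' p, l = l' ++ [p] := by
  have hne : l ≠ [] := by rintro rfl; rw [hl.2.2.symm] at hn; simp at hn
  exact ⟨l.dropLast, l.getLast hne, (List.dropLast_append_getLast hne).symm⟩

lemma inc_injOn {n : ℕ} (hn : 0 < n) : Set.InjOn inc (A n) := by
  intro l₁ h₁ l₂ h₂ heq
  obtain ⟨a, x, rfl⟩ := exists_concat_of_mem hn h₁
  obtain ⟨c, y, rfl⟩ := exists_concat_of_mem hn h₂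
  rw [inc_concat, inc_concat] at heq
  obtain ⟨h1, h2⟩ := List.append_inj' heq rfl
  simp at h2
  rw [h1, h2]

lemma E_r2 (k : ℕ) (hk : 0 < k) : A (2 * k + 1) = insert [k, k + 1] (inc '' A (2 * k)) := by
  ext l
  constructor
  · intro hl
    obtain ⟨l', p, rfl⟩ := exists_concat_of_mem (by omega) hl
    rw [mem_A_concat] at hl
    obtain ⟨⟨hd, hn⟩, hlt, hp, hle, hsum⟩ := hl
    have hsl : l'.sum = 2 * k + 1 - p := by omega
    have hpk : k + 1 ≤ p := by omega
    by_cases hcase : l' ++ [p] = [k, k + 1]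
    · exact Or.inl hcase
    · refine Or.inr ⟨l' ++ [p - 1], ?_, ?_⟩
      · rw [mem_A_concat]
        refine ⟨⟨hd, hn⟩, ?_, by omega, by omega, by omega⟩
        intro x hx
        have hxs := elem_le_sum hx
        by_contra hcon
        push_neg at hcon
        have hx1 : x = p - 1 := by omega
        have hpk1 : p = k + 1 := by omega
        have hxk : x = k := by omega
        have : l' = [x] := eq_single_of_mem_sum hd.2 hx (by omega)
        apply hcase
        rw [this]
        simp
        omega
      · rw [inc_concat]
        congr 1
        simp
        omega
  · intro hl
    rcases hl with hl | ⟨l', hl', rfl⟩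
    · subst hl
      have h1 : [k] ++ [k + 1] ∈ A (2 * k + 1) := by
        rw [mem_A_concat]
        refine ⟨⟨(singleton_mem_A hk).1, (singleton_mem_A hk).2.1⟩, ?_, by omega, ?_, ?_⟩
        · intro x hx; simp at hx; omega
        · simp only [List.sum_cons, List.sum_nil]; omega
        · simp only [List.sum_cons, List.sum_nil]; omega
      simpa using h1
    · obtain ⟨l'', p, rfl⟩ := exists_concat_of_mem (by omega) hl'
      rw [mem_A_concat] at hl'
      obtain ⟨⟨hd, hn⟩, hlt, hp, hle, hsum⟩ := hl'
      rw [inc_concat, mem_A_concat]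
      exact ⟨⟨hd, hn⟩, fun x hx => by have := hlt x hx; omega, by omega, by omega, by omega⟩

lemma not_mem_inc_image (k : ℕ) : [k, k + 1] ∉ inc '' A (2 * k) := by
  rintro ⟨l, hl, heq⟩
  rcases Nat.eq_zero_or_pos k with rfl | hk
  · have : l = [] := by
      have h0 : (2 * 0 : ℕ) = 0 := rfl
      rw [h0, A_zero] at hl
      simpa using hl
    subst this
    simp [inc] at heq
  · obtain ⟨l', p, rfl⟩ := exists_concat_of_mem (by omega) hl
    rw [mem_A_concat] at hl
    obtain ⟨⟨hd, hn⟩, hlt, hp, hle, hsum⟩ := hl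
    rw [inc_concat] at heq
    have h2 : l' ++ [p + 1] = [k] ++ [k + 1] := by simpa using heq
    obtain ⟨h3, h4⟩ := List.append_inj' h2 rfl
    simp at h4
    subst h3
    have := hlt k (by simp)
    omega

lemma E_r1 (k : ℕ) :
    A (2 * k + 2) = inc '' A (2 * k + 1) ∪ (fun l => l ++ [k + 1]) '' (A (k + 1) \ {[k + 1]}) := by
  ext l
  constructor
  · intro hl
    obtain ⟨l', p, rfl⟩ := exists_concat_of_mem (by omega) hl
    rw [mem_A_concat] at hl
    obtain ⟨⟨hd, hn⟩, hlt, hp, hle, hsum⟩ := hl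
    have hpk : k + 1 ≤ p := by omega
    rcases Nat.eq_or_lt_of_le hpk with hpe | hps
    · -- p = k + 1 : right side
      refine Or.inr ⟨l', ⟨⟨hd, hn, by omega⟩, ?_⟩, by rw [← hpe]⟩
      intro hcon
      simp only [Set.mem_singleton_iff] at hcon
      have : k + 1 ∈ l' := by rw [hcon]; simp
      have := hlt _ this
      omega
    · -- p ≥ k + 2 : left side
      refine Or.inl ⟨l' ++ [p - 1], ?_, ?_⟩
      · rw [mem_A_concat]
        refine ⟨⟨hd, hn⟩, ?_, by omega, by omega, by omega⟩
        intro x hx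
        have := elem_le_sum hx
        omega
      · rw [inc_concat]
        congr 1
        simp
        omega
  · intro hl
    rcases hl with ⟨l', hl', rfl⟩ | ⟨l', ⟨hl', hne⟩, rfl⟩
    · obtain ⟨l'', p, rfl⟩ := exists_concat_of_mem (by omega) hl'
      rw [mem_A_concat] at hl'
      obtain ⟨⟨hd, hn⟩, hlt, hp, hle, hsum⟩ := hl'
      rw [inc_concat, mem_A_concat]
      exact ⟨⟨hd, hn⟩, fun x hx => by have := hlt x hx; omega, by omega, by omega, by omega⟩
    · simp only [Set.mem_singleton_iff] at hne
      obtain ⟨⟨hsort, hposl⟩, hnsql, hsuml⟩ := hl'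
      rw [mem_A_concat]
      refine ⟨⟨⟨hsort, hposl⟩, hnsql⟩, ?_, by omega, by omega, by omega⟩
      intro x hx
      have hxs := elem_le_sum hx
      rcases Nat.lt_or_ge x (k + 1) with h | h
      · exact h
      · exfalso
        have hxe : x = k + 1 := by omega
        exact hne (hxe ▸ eq_single_of_mem_sum hposl hx (by omega))

lemma disj_r1 (k : ℕ) :
    Disjoint (inc '' A (2 * k + 1)) ((fun l => l ++ [k + 1]) '' (A (k + 1) \ {[k + 1]})) := by
  rw [Set.disjoint_left]
  rintro z ⟨l₁, hl₁, rfl⟩ ⟨l₂, ⟨hl₂, _⟩, heq⟩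
  obtain ⟨l'', p, rfl⟩ := exists_concat_of_mem (by omega) hl₁
  rw [mem_A_concat] at hl₁
  obtain ⟨_, _, hp, hle, hsum⟩ := hl₁
  rw [inc_concat] at heq
  obtain ⟨-, h4⟩ := List.append_inj' heq rfl
  simp at h4
  omega

lemma b_rec2 (k : ℕ) (hk : 0 < k) : (A (2 * k + 1)).ncard = (A (2 * k)).ncard + 1 := by
  rw [E_r2 k hk,
    Set.ncard_insert_of_notMem (not_mem_inc_image k) ((A_finite _).image _),
    Set.ncard_image_of_injOn (inc_injOn (by omega))]

lemma b_rec1 (k : ℕ) :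
    (A (2 * k + 2)).ncard + 1 = (A (2 * k + 1)).ncard + (A (k + 1)).ncard := by
  rw [E_r1 k, Set.ncard_union_eq (disj_r1 k) ((A_finite _).image _)
      (((A_finite _).diff).image _),
    Set.ncard_image_of_injOn (inc_injOn (by omega)),
    Set.ncard_image_of_injOn ((fun l₁ _ l₂ _ h => by
      simpa using List.append_inj' h rfl : Set.InjOn (fun l => l ++ [k + 1]) _))]
  have := Set.ncard_diff_singleton_add_one (singleton_mem_A (show 0 < k + 1 by omega))
    (A_finite (k + 1))
  omega

lemma b_eq_ncard (n : ℕ) : b n = (A n).ncard := rfl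

lemma bcongr {x y : ℕ} (h : x = y) : b x = b y := by rw [h]

lemma b_zero : b 0 = 1 := by rw [b_eq_ncard, A_zero]; simp
lemma b_one : b 1 = 1 := by rw [b_eq_ncard, A_one]; simp

lemma R2 (k : ℕ) (hk : 0 < k) : b (2 * k + 1) = b (2 * k) + 1 := b_rec2 k hk
lemma R1 (k : ℕ) : b (2 * k + 2) + 1 = b (2 * k + 1) + b (k + 1) := b_rec1 k

noncomputable def C (k : ℕ) : ℕ := ∑ j ∈ Finset.range (k + 1), b j

lemma Ccongr {x y : ℕ} (h : x = y) : C x = C y := by rw [h]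

lemma C_succ (k : ℕ) : C (k + 1) = C k + b (k + 1) := Finset.sum_range_succ b (k + 1)

lemma L1 : ∀ k, C (2 * k + 1) % 2 = k % 2 := by
  intro k
  induction k with
  | zero =>
    show (∑ j ∈ Finset.range 2, b j) % 2 = 0
    simp [Finset.sum_range_succ, b_zero, b_one]
  | succ k ih =>
    have e1 : C (2 * (k + 1) + 1) = C (2 * k + 1) + b (2 * k + 2) + b (2 * k + 3) := by
      have h1 : C (2 * (k + 1) + 1) = C (2 * k + 2) + b (2 * k + 3) := by
        rw [Ccongr (show 2 * (k + 1) + 1 = (2 * k + 2) + 1 by ring), C_succ]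
      rw [h1, Ccongr (show 2 * k + 2 = (2 * k + 1) + 1 by ring), C_succ]
    have hb3 : b (2 * k + 3) = b (2 * k + 2) + 1 := by
      have h := R2 (k + 1) (by omega)
      rwa [bcongr (show 2 * (k + 1) + 1 = 2 * k + 3 by ring),
        bcongr (show 2 * (k + 1) = 2 * k + 2 by ring)] at h
    omega

lemma L2 : ∀ k, 0 < k → b (2 * k) % 2 = (C k + 1) % 2 := by
  intro k
  induction k with
  | zero => omega
  | succ k ih =>
    intro _
    rcases Nat.eq_zero_or_pos k with rfl | hk
    · -- b 2 % 2 = (C 1 + 1) % 2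
      have h2 : b 2 + 1 = b 1 + b 1 := by
        have := R1 0
        simpa using this
      have hC : C 1 = b 0 + b 1 := by
        show (∑ j ∈ Finset.range 2, b j) = _
        simp [Finset.sum_range_succ]
      rw [b_zero] at hC
      rw [b_one] at h2 hC
      have hb : b (2 * (0 + 1)) = b 2 := bcongr (by ring)
      have hc : C (0 + 1) = C 1 := Ccongr (by ring)
      omega
    · have e1 : b (2 * k + 2) + 1 = b (2 * k + 1) + b (k + 1) := R1 k
      have e2 : b (2 * k + 1) = b (2 * k) + 1 := R2 k hk
      have e3 : C (k + 1) = C k + b (k + 1) := C_succ k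
      have e4 : b (2 * (k + 1)) = b (2 * k + 2) := bcongr (by ring)
      have := ih hk
      omega

lemma L3 : ∀ k, 0 < k → C (2 * k) % 2 = (k + C k) % 2 := by
  intro k hk
  have e1 : C (2 * k + 1) = C (2 * k) + b (2 * k + 1) := C_succ (2 * k)
  have e2 : b (2 * k + 1) = b (2 * k) + 1 := R2 k hk
  have e3 := L2 k hk
  have e4 := L1 k
  omega


theorem stmt_10 (m : ℕ) (hm : 0 < m) :
    b (16 * m) % 2 = b (8 * m) % 2 ∧
    Even (b (32 * m + 8)) ∧ Odd (b (32 * m + 24)) := by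
  have h16 : b (16 * m) = b (2 * (8 * m)) := bcongr (by ring)
  have h8 : b (8 * m) = b (2 * (4 * m)) := bcongr (by ring)
  have e1 := L2 (8 * m) (by omega)
  have e2 := L2 (4 * m) (by omega)
  have e3 : C (2 * (4 * m)) % 2 = (4 * m + C (4 * m)) % 2 := L3 (4 * m) (by omega)
  have e3' : C (8 * m) = C (2 * (4 * m)) := Ccongr (by ring)
  -- second part
  have f1 : b (32 * m + 8) = b (2 * (16 * m + 4)) := bcongr (by ring)
  have f2 := L2 (16 * m + 4) (by omega)
  have f3 : C (2 * (8 * m + 2)) % 2 = (8 * m + 2 + C (8 * m + 2)) % 2 := L3 (8 * m + 2) (by omega)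
  have f3' : C (16 * m + 4) = C (2 * (8 * m + 2)) := Ccongr (by ring)
  have f4 : C (2 * (4 * m + 1)) % 2 = (4 * m + 1 + C (4 * m + 1)) % 2 := L3 (4 * m + 1) (by omega)
  have f4' : C (8 * m + 2) = C (2 * (4 * m + 1)) := Ccongr (by ring)
  have f5 : C (2 * (2 * m) + 1) % 2 = (2 * m) % 2 := L1 (2 * m)
  have f5' : C (4 * m + 1) = C (2 * (2 * m) + 1) := Ccongr (by ring)
  -- third part
  have g1 : b (32 * m + 24) = b (2 * (16 * m + 12)) := bcongr (by ring)
  have g2 := L2 (16 * m + 12) (by omega)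
  have g3 : C (2 * (8 * m + 6)) % 2 = (8 * m + 6 + C (8 * m + 6)) % 2 := L3 (8 * m + 6) (by omega)
  have g3' : C (16 * m + 12) = C (2 * (8 * m + 6)) := Ccongr (by ring)
  have g4 : C (2 * (4 * m + 3)) % 2 = (4 * m + 3 + C (4 * m + 3)) % 2 := L3 (4 * m + 3) (by omega)
  have g4' : C (8 * m + 6) = C (2 * (4 * m + 3)) := Ccongr (by ring)
  have g5 : C (2 * (2 * m + 1) + 1) % 2 = (2 * m + 1) % 2 := L1 (2 * m + 1)
  have g5' : C (4 * m + 3) = C (2 * (2 * m + 1) + 1) := Ccongr (by ring)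
  refine ⟨by omega, Nat.even_iff.2 (by omega), Nat.odd_iff.2 (by omega)⟩
end
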